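/- If $(X_{1:T}, \mathbf{S}_1,\dots,\mathbf{S}_T)$ is distributed according to the conditional extended target $\pi_\theta^N(\cdot)$, then the trajectory $X'_{1:T}$ obtained at any step of the backward sampling procedure (sampling $X'_{n+1:T}$ from the final weights, then successively redrawing the prefix $X'_{1:n}$ from the backward weights $V_n^\theta(x_{1:n} | x'_{n+1:T}) \propto W_n^\theta(x_{1:n}) p_\theta(x'_{n+1:T}|x_{1:n}) p_\theta(y_{n+1:T}|y_{1:n}, x_{1:n}, x'_{n+1:T})$) is exactly distributed according to the posterior $p_\theta(x_{1:T} | y_{1:T})$. -/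
import Mathlib


open Finset

/-- Sequences of support sets `s_1 ⊆ 𝒳, s_2 ⊆ 𝒳², …, s_T ⊆ 𝒳^T`. -/
abbrev DSupp (X : Type*) (T : ℕ) := (m : Fin T) → Finset (Fin (m.1 + 1) → X)

variable {X : Type*} [Fintype X] [DecidableEq X] {T : ℕ}

/-- Replace the first `n` coordinates of a trajectory by a given prefix. -/
def combineT (n : ℕ) (xp : Fin n → X) (x : Fin T → X) : Fin T → X :=
  fun i => if h : i.1 < n then xp ⟨i.1, h⟩ else x i

/-- The prefix `x_{1:n}` of a trajectory. -/
def prefT (hT : 0 < T) (x : Fin T → X) (n : ℕ) : Fin n → X :=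
  fun i => x ⟨min i.1 (T - 1), by omega⟩

/-- Marginal of the extended target over the support sets at times `> n`,
i.e. the joint mass of `(x, s_1, …, s_n)`. -/
def piPre (π : (Fin T → X) → DSupp X T → ℝ) (n : ℕ)
    (x : Fin T → X) (s : DSupp X T) : ℝ :=
  ∑ s' ∈ Finset.univ.filter
      (fun s' : DSupp X T => ∀ m : Fin T, m.1 < n → s' m = s m),
    π x s'

/-- Normalized backward sampling weight at time `n`: the conditional
probability, under the extended target, of the prefix `x_{1:n}` given the
suffix `x_{n+1:T}` and the support sets `s_1, …, s_n`. -/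
noncomputable def bwV (π : (Fin T → X) → DSupp X T → ℝ) (n : ℕ)
    (x : Fin T → X) (s : DSupp X T) (xp : Fin n → X) : ℝ :=
  piPre π n (combineT n xp x) s /
    ∑ xp' : Fin n → X, piPre π n (combineT n xp' x) s

/-- One backward sampling step at time `n`: redraw the prefix `x_{1:n}` from
the normalized backward weights, keeping the suffix and support sets. -/
noncomputable def bwStep (π : (Fin T → X) → DSupp X T → ℝ) (hT : 0 < T)
    (n : ℕ) (d : (Fin T → X) → DSupp X T → ℝ) :
    (Fin T → X) → DSupp X T → ℝ :=
  fun x s => (∑ xp' : Fin n → X, d (combineT n xp' x) s) *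
    bwV π n x s (prefT hT x n)

/-- The law of (trajectory, support sets) after the initial draw from the final
weights (which leaves the extended target `π` invariant) followed by `j`
backward sampling steps at times `T-1, T-2, …`. -/
noncomputable def bwSeq (π : (Fin T → X) → DSupp X T → ℝ) (hT : 0 < T) :
    ℕ → (Fin T → X) → DSupp X T → ℝ
  | 0 => π
  | j + 1 => bwStep π hT (T - 1 - j) (bwSeq π hT j)

lemma filter_agree_eq {n : ℕ} (s s' : DSupp X T)
    (h : ∀ m : Fin T, m.1 < n → s' m = s m) :
    Finset.univ.filter
        (fun s'' : DSupp X T => ∀ m : Fin T, m.1 < n → s'' m = s' m)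
      = Finset.univ.filter
        (fun s'' : DSupp X T => ∀ m : Fin T, m.1 < n → s'' m = s m) := by
  ext s''
  simp only [mem_filter, mem_univ, true_and]
  constructor <;> intro hh m hm
  · rw [hh m hm, h m hm]
  · rw [hh m hm, ← h m hm]

lemma piPre_congr (π : (Fin T → X) → DSupp X T → ℝ) {n : ℕ}
    {s s' : DSupp X T} (h : ∀ m : Fin T, m.1 < n → s' m = s m)
    (x : Fin T → X) : piPre π n x s' = piPre π n x s := by
  unfold piPre
  rw [filter_agree_eq s s' h]

lemma piPre_nonneg (π : (Fin T → X) → DSupp X T → ℝ)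
    (hπ0 : ∀ x s, 0 ≤ π x s) (n : ℕ) (x : Fin T → X) (s : DSupp X T) :
    0 ≤ piPre π n x s :=
  Finset.sum_nonneg fun s' _ => hπ0 x s'

lemma piPre_step (d : (Fin T → X) → DSupp X T → ℝ) (n : ℕ) (hn : n < T)
    (x : Fin T → X) (s : DSupp X T) :
    piPre d n x s = ∑ t : Finset (Fin (n + 1) → X),
      piPre d (n + 1) x (Function.update s ⟨n, hn⟩ t) := by
  unfold piPre
  rw [← Finset.sum_fiberwise (Finset.univ.filter
      (fun s' : DSupp X T => ∀ m : Fin T, m.1 < n → s' m = s m))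
      (fun s' : DSupp X T => s' ⟨n, hn⟩) (d x)]
  apply Finset.sum_congr rfl
  intro t _
  apply Finset.sum_congr _ (fun _ _ => rfl)
  rw [Finset.filter_filter]
  ext s'
  simp only [mem_filter, mem_univ, true_and]
  constructor
  · rintro ⟨h1, h2⟩ m hm
    rcases Nat.lt_succ_iff_lt_or_eq.mp hm with hm' | hm'
    · rw [Function.update_of_ne (by
        intro he; rw [he] at hm'; simp at hm'), h1 m hm']
    · have hme : m = ⟨n, hn⟩ := Fin.ext hm'
      subst hme
      rw [h2, Function.update_self]
  · intro h
    refine ⟨fun m hm => ?_, ?_⟩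
    · have h2 := h m (Nat.lt_succ_of_lt hm)
      rwa [Function.update_of_ne (by
        intro he; rw [he] at hm; simp at hm)] at h2
    · have h2 := h ⟨n, hn⟩ (Nat.lt_succ_self n)
      rwa [Function.update_self] at h2

lemma piPre_zero (d : (Fin T → X) → DSupp X T → ℝ) (x : Fin T → X)
    (s : DSupp X T) : piPre d 0 x s = ∑ s' : DSupp X T, d x s' := by
  unfold piPre
  congr 1
  apply Finset.filter_true_of_mem
  intro s' _ m hm
  omega

lemma piPre_down (d e : (Fin T → X) → DSupp X T → ℝ) :
    ∀ n : ℕ, n ≤ T → (∀ x s, piPre d n x s = piPre e n x s) →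
    ∀ k, k ≤ n → ∀ x s, piPre d k x s = piPre e k x s := by
  intro n
  induction n with
  | zero =>
    intro _ h k hk
    interval_cases k
    exact h
  | succ n ih =>
    intro hn h k hk
    rcases eq_or_lt_of_le hk with hk' | hk'
    · subst hk'
      exact h
    · have hn' : n < T := hn
      have h' : ∀ x s, piPre d n x s = piPre e n x s := by
        intro x s
        rw [piPre_step d n hn' x s, piPre_step e n hn' x s]
        exact Finset.sum_congr rfl fun t _ => h x _
      exact ih (Nat.le_of_succ_le hn) h' k (Nat.lt_succ_iff.mp hk')

lemma combine_pref (hT : 0 < T) (n : ℕ) (hn : n ≤ T) (x : Fin T → X) :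
    combineT n (prefT hT x n) x = x := by
  funext i
  unfold combineT prefT
  split
  · next h =>
    congr 1
    exact Fin.ext (by simp; omega)
  · rfl

lemma bwV_congr (π : (Fin T → X) → DSupp X T → ℝ) {n : ℕ}
    {s s' : DSupp X T} (h : ∀ m : Fin T, m.1 < n → s' m = s m)
    (x : Fin T → X) (xp : Fin n → X) :
    bwV π n x s' xp = bwV π n x s xp := by
  unfold bwV
  rw [piPre_congr π h]
  congr 1
  exact Finset.sum_congr rfl fun xp' _ => piPre_congr π h _

/-- Proposition 1: if `(X_{1:T}, S_1, …, S_T)` is distributed according to the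
extended target `π_θ^N` (whose trajectory marginal is the posterior
`p_θ(x_{1:T}|y_{1:T})`), then the trajectory obtained at **any** step of the
backward sampling procedure is distributed exactly according to the posterior:
after the initial draw from the final weights and after each backward
redrawing of the prefix from the backward weights, the trajectory marginal of
the current law equals `p`. -/
theorem backward_sampling_exact
    (X : Type*) [Fintype X] [DecidableEq X] (T : ℕ) (hT : 0 < T)
    (π : (Fin T → X) → DSupp X T → ℝ)
    (hπ0 : ∀ x s, 0 ≤ π x s)
    (hπ1 : ∑ x : Fin T → X, ∑ s : DSupp X T, π x s = 1)
    (p : (Fin T → X) → ℝ)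
    (hmarg : ∀ x, ∑ s : DSupp X T, π x s = p x) :
    ∀ j, j ≤ T - 1 → ∀ x, ∑ s : DSupp X T, bwSeq π hT j x s = p x := by
  have key : ∀ j, j ≤ T - 1 →
      ∀ x s, piPre (bwSeq π hT j) (T - j) x s = piPre π (T - j) x s := by
    intro j
    induction j with
    | zero => intro _ x s; rfl
    | succ j ih =>
      intro hj x s
      have hj' : j ≤ T - 1 := Nat.le_of_succ_le hj
      have hnT : T - 1 - j < T := by omega
      have hTj : T - j = (T - 1 - j) + 1 := by omega
      have hTj1 : T - (j + 1) = T - 1 - j := by omega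
      set n := T - 1 - j with hn
      have ihn : ∀ x s, piPre (bwSeq π hT j) n x s = piPre π n x s := by
        have h1 := ih hj'
        rw [hTj] at h1
        exact piPre_down _ _ (n + 1) hnT h1 n (Nat.le_succ n)
      rw [hTj1]
      show piPre (bwStep π hT n (bwSeq π hT j)) n x s = piPre π n x s
      have hstep : piPre (bwStep π hT n (bwSeq π hT j)) n x s
          = (∑ xp' : Fin n → X, piPre π n (combineT n xp' x) s)
              * bwV π n x s (prefT hT x n) := by
        calc piPre (bwStep π hT n (bwSeq π hT j)) n x s
            = ∑ s' ∈ Finset.univ.filter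
                (fun s'' : DSupp X T => ∀ m : Fin T, m.1 < n → s'' m = s m),
                (∑ xp' : Fin n → X, bwSeq π hT j (combineT n xp' x) s')
                  * bwV π n x s' (prefT hT x n) := rfl
          _ = ∑ s' ∈ Finset.univ.filter
                (fun s'' : DSupp X T => ∀ m : Fin T, m.1 < n → s'' m = s m),
                (∑ xp' : Fin n → X, bwSeq π hT j (combineT n xp' x) s')
                  * bwV π n x s (prefT hT x n) := by
              refine Finset.sum_congr rfl fun s' hs' => ?_
              simp only [mem_filter, mem_univ, true_and] at hs'
              rw [bwV_congr π hs']
          _ = (∑ s' ∈ Finset.univ.filter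
                (fun s'' : DSupp X T => ∀ m : Fin T, m.1 < n → s'' m = s m),
                ∑ xp' : Fin n → X, bwSeq π hT j (combineT n xp' x) s')
                  * bwV π n x s (prefT hT x n) := (Finset.sum_mul _ _ _).symm
          _ = (∑ xp' : Fin n → X, piPre (bwSeq π hT j) n (combineT n xp' x) s)
                  * bwV π n x s (prefT hT x n) := by rw [Finset.sum_comm]; rfl
          _ = (∑ xp' : Fin n → X, piPre π n (combineT n xp' x) s)
                  * bwV π n x s (prefT hT x n) := by
              congr 1
              exact Finset.sum_congr rfl fun xp' _ => ihn _ _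
      rw [hstep]
      unfold bwV
      rw [combine_pref hT n (by omega) x]
      by_cases hD0 : (∑ xp' : Fin n → X, piPre π n (combineT n xp' x) s) = 0
      · have hterm : piPre π n x s = 0 := by
          have h1 : ∀ xp' ∈ (Finset.univ : Finset (Fin n → X)),
              0 ≤ piPre π n (combineT n xp' x) s :=
            fun xp' _ => piPre_nonneg π hπ0 n _ s
          have h2 := (Finset.sum_eq_zero_iff_of_nonneg h1).mp hD0
            (prefT hT x n) (mem_univ _)
          rwa [combine_pref hT n (by omega) x] at h2
        rw [hterm, hD0]
        simp
      · rw [mul_comm, div_mul_cancel₀ _ hD0]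
  intro j hj x
  have h0 := piPre_down (bwSeq π hT j) π (T - j) (by omega) (key j hj)
    0 (Nat.zero_le _) x (fun _ => ∅)
  rw [piPre_zero, piPre_zero] at h0
  rw [h0, hmarg]
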